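/- The impulse invariance recursion y^{n+1} = 2 e^{-γΔt/2} cos(ω_γ Δt) y^n - e^{-γΔt} y^{n-1}, rewritten as the linear map (ŷⁿ, p̂ⁿ) ↦ (ŷ^{n+1}, p̂^{n+1}) with ŷⁿ = (yⁿ + y^{n-1})/2 and p̂ⁿ = m(yⁿ - y^{n-1})/Δt, has Jacobian determinant equal to e^{-γΔt} (i.e. the map is conformal symplectic with contraction factor e^{-γΔt}). -/

import Mathlib

theorem stmt15 (m γ Δt ωγ : ℝ) (hm : 0 < m) (hγ : 0 ≤ γ) (hΔt : 0 < Δt)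
    (a₁ a₂ : ℝ)
    (ha₁ : a₁ = -2 * Real.exp (-γ * Δt / 2) * Real.cos (ωγ * Δt))
    (ha₂ : a₂ = Real.exp (-γ * Δt))
    (Φ : ℝ × ℝ → ℝ × ℝ)
    -- Φ maps (ŷⁿ, p̂ⁿ) to (ŷ^{n+1}, p̂^{n+1}): recover y^{n-1}, yⁿ from
    -- ŷⁿ = (yⁿ + y^{n-1})/2, p̂ⁿ = m (yⁿ - y^{n-1})/Δt, apply the recursion
    -- y^{n+1} = -a₁ yⁿ - a₂ y^{n-1}, and form the new averaged variables.
    (hΦ : ∀ v : ℝ × ℝ,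
      Φ v =
        (((v.1 + Δt * v.2 / (2 * m)) +
            (-a₁ * (v.1 + Δt * v.2 / (2 * m)) - a₂ * (v.1 - Δt * v.2 / (2 * m)))) / 2,
          m * ((-a₁ * (v.1 + Δt * v.2 / (2 * m)) - a₂ * (v.1 - Δt * v.2 / (2 * m))) -
              (v.1 + Δt * v.2 / (2 * m))) / Δt)) :
    ∀ v : ℝ × ℝ, (fderiv ℝ Φ v).det = Real.exp (-γ * Δt) := by
  have hm' : m ≠ 0 := ne_of_gt hm
  have hΔt' : Δt ≠ 0 := ne_of_gt hΔt
  set A : ℝ := (1 - a₁ - a₂) / 2 with hA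
  set B : ℝ := Δt * (1 - a₁ + a₂) / (4 * m) with hB
  set C : ℝ := m * (-a₁ - a₂ - 1) / Δt with hC
  set D : ℝ := (-a₁ + a₂ - 1) / 2 with hD
  set L : ℝ × ℝ →L[ℝ] ℝ × ℝ :=
    ((A • ContinuousLinearMap.fst ℝ ℝ ℝ + B • ContinuousLinearMap.snd ℝ ℝ ℝ).prod
      (C • ContinuousLinearMap.fst ℝ ℝ ℝ + D • ContinuousLinearMap.snd ℝ ℝ ℝ)) with hL
  have hΦL : Φ = ⇑L := by
    funext v
    rw [hΦ v, hL]
    simp only [ContinuousLinearMap.prod_apply, ContinuousLinearMap.add_apply,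
      ContinuousLinearMap.coe_smul', Pi.smul_apply, ContinuousLinearMap.coe_fst',
      ContinuousLinearMap.coe_snd', smul_eq_mul, hA, hB, hC, hD]
    refine Prod.ext ?_ ?_ <;> field_simp <;> ring
  intro v
  have hfd : fderiv ℝ Φ v = L := by rw [hΦL]; exact L.fderiv
  rw [hfd]
  show LinearMap.det (L.toLinearMap) = Real.exp (-γ * Δt)
  rw [← LinearMap.det_toMatrix (Module.Basis.finTwoProd ℝ), Matrix.det_fin_two]
  simp only [LinearMap.toMatrix_apply, Module.Basis.finTwoProd_zero, Module.Basis.finTwoProd_one, hL,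
    ContinuousLinearMap.coe_coe, ContinuousLinearMap.prod_apply, ContinuousLinearMap.add_apply,
    ContinuousLinearMap.coe_smul', Pi.smul_apply, ContinuousLinearMap.coe_fst',
    ContinuousLinearMap.coe_snd', smul_eq_mul, mul_one, mul_zero, add_zero, zero_add,
    Module.Basis.coe_finTwoProd_repr, Matrix.cons_val_zero, Matrix.cons_val_one, Matrix.head_cons]
  rw [← ha₂, hA, hB, hC, hD]
  field_simp
  ring
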